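/- Let β > 0 and C > 0, and let W : ℝ → ℝ be the inverse of the strictly decreasing bijection G(W) = −W − C·W·|W|^{1/β} of ℝ. Then near x = 0 the profile W agrees with −x + C·x·|x|^{1/β} to higher order: there exist x₀ > 0 and K > 0 such that for all |x| ≤ x₀, |W(x) − (−x + C·x·|x|^{1/β})| ≤ K·|x|^{1 + 2/β}. -/
import Mathlib


open Real Set

lemma aux_mvt_rpow (p : ℝ) (hp : 0 < p) {a b : ℝ} (ha : 0 ≤ a) (hab : a ≤ b) :
    b * b ^ p - a * a ^ p ≤ (1 + p) * b ^ p * (b - a) := by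
  have hb : 0 ≤ b := ha.trans hab
  have hq : (0:ℝ) < 1 + p := by linarith
  have hderiv : ∀ t ∈ Icc (0:ℝ) b, HasDerivWithinAt (fun t : ℝ => t ^ (1+p))
      ((1+p) * t ^ p) (Icc (0:ℝ) b) t := by
    intro t ht
    have h := Real.hasDerivAt_rpow_const (x := t) (p := 1+p) (Or.inr (by linarith))
    have he : (1:ℝ) + p - 1 = p := by ring
    rw [he] at h
    exact h.hasDerivWithinAt
  have hbound : ∀ t ∈ Icc (0:ℝ) b, ‖(1+p) * t ^ p‖ ≤ (1+p) * b ^ p := by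
    intro t ht
    rw [Real.norm_eq_abs, abs_mul, abs_of_pos hq,
      abs_of_nonneg (Real.rpow_nonneg ht.1 p)]
    exact mul_le_mul_of_nonneg_left (Real.rpow_le_rpow ht.1 ht.2 hp.le) hq.le
  have key := (convex_Icc (0:ℝ) b).norm_image_sub_le_of_norm_hasDerivWithin_le
    hderiv hbound ⟨ha, hab⟩ ⟨hb, le_refl b⟩
  rw [Real.norm_eq_abs, Real.norm_eq_abs] at key
  have h1 : a ^ (1+p) ≤ b ^ (1+p) := Real.rpow_le_rpow ha hab hq.le
  have hsplit : ∀ c : ℝ, 0 ≤ c → c ^ (1+p) = c * c ^ p := by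
    intro c hc
    rw [Real.rpow_add' hc (by linarith), Real.rpow_one]
  calc b * b ^ p - a * a ^ p = b ^ (1+p) - a ^ (1+p) := by
        rw [hsplit a ha, hsplit b hb]
    _ ≤ |b ^ (1+p) - a ^ (1+p)| := le_abs_self _
    _ ≤ (1+p) * b ^ p * |b - a| := key
    _ = (1+p) * b ^ p * (b - a) := by rw [abs_of_nonneg (by linarith)]

/-- For `β > 0`, `C > 0`, the inverse `W` of the strictly
decreasing bijection `G W = -W - C·W·|W|^(1/β)` agrees with
`-x + C·x·|x|^(1/β)` near `x = 0` to higher order: there are `x₀ > 0` and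
`K > 0` with `|W x - (-x + C·x·|x|^(1/β))| ≤ K·|x|^(1+2/β)` for `|x| ≤ x₀`. -/
theorem selfsimilar_profile_near_zero (β C : ℝ) (hβ : 0 < β) (hC : 0 < C)
    (W : ℝ → ℝ) (hW : ∀ x : ℝ, x = -(W x) - C * W x * |W x| ^ (1/β)) :
    ∃ x₀ > (0:ℝ), ∃ K > (0:ℝ), ∀ x : ℝ, |x| ≤ x₀ →
      |W x - (-x + C * x * |x| ^ (1/β))| ≤ K * |x| ^ (1 + 2/β) := by
  have hp : 0 < 1/β := by positivity
  set p := 1/β with hpdef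
  refine ⟨1, one_pos, C^2 * (1+p), by positivity, ?_⟩
  intro x _
  have hWx := hW x
  set w := W x with hw
  by_cases hw0 : w = 0
  · have hx0 : x = 0 := by rw [hWx, hw0]; simp
    subst hx0
    simp only [hw0, abs_zero]
    rw [Real.zero_rpow (by positivity : (1:ℝ) + 2/β ≠ 0)]
    simp
  · have hpw : (0:ℝ) < 1 + C * |w| ^ p := by positivity
    have hfac : x = -(w * (1 + C * |w| ^ p)) := by rw [hWx]; ring
    have habs : |x| = |w| * (1 + C * |w| ^ p) := by
      rw [hfac, abs_neg, abs_mul, abs_of_pos hpw]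
    have hwn : (0:ℝ) ≤ |w| ^ p := Real.rpow_nonneg (abs_nonneg w) p
    have hab : |w| ≤ |x| := by
      rw [habs]
      nlinarith [abs_nonneg w, mul_nonneg (abs_nonneg w) (mul_nonneg hC.le hwn)]
    have hdiff : |x| - |w| = C * (|w| * |w| ^ p) := by rw [habs]; ring
    have hsum : w + x = -(C * w * |w| ^ p) := by linarith [hWx]
    have hT : w - (-x + C * x * |x| ^ p) = -(C * (w * |w| ^ p + x * |x| ^ p)) := by
      linear_combination hsum
    have hmono : |w| * |w| ^ p ≤ |x| * |x| ^ p :=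
      mul_le_mul hab (Real.rpow_le_rpow (abs_nonneg w) hab hp.le) hwn (abs_nonneg x)
    have key : |w * |w| ^ p + x * |x| ^ p| = |x| * |x| ^ p - |w| * |w| ^ p := by
      rcases lt_or_gt_of_ne hw0 with hneg | hposw
      · have hx_pos : 0 < x := by rw [hfac]; nlinarith
        have e1 : w * |w| ^ p + x * |x| ^ p = |x| * |x| ^ p - |w| * |w| ^ p := by
          rw [abs_of_neg hneg, abs_of_pos hx_pos]; ring
        rw [e1, abs_of_nonneg (by linarith)]
      · have hx_neg : x < 0 := by rw [hfac]; nlinarith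
        have e1 : w * |w| ^ p + x * |x| ^ p = -(|x| * |x| ^ p - |w| * |w| ^ p) := by
          rw [abs_of_pos hposw, abs_of_neg hx_neg]; ring
        rw [e1, abs_neg, abs_of_nonneg (by linarith)]
    have hbpos : 0 < |x| := lt_of_lt_of_le (abs_pos.mpr hw0) hab
    have hmvt := aux_mvt_rpow p hp (abs_nonneg w) hab
    have hexp : |x| ^ (1 + 2/β) = |x| * |x| ^ p * |x| ^ p := by
      rw [show (1 : ℝ) + 2/β = 1 + p + p by rw [hpdef]; ring,
        Real.rpow_add hbpos, Real.rpow_add hbpos, Real.rpow_one]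
    have hxpn : (0:ℝ) ≤ |x| ^ p := Real.rpow_nonneg (abs_nonneg x) p
    calc |w - (-x + C * x * |x| ^ p)| = C * (|x| * |x| ^ p - |w| * |w| ^ p) := by
          rw [hT, abs_neg, abs_mul, abs_of_pos hC, key]
      _ ≤ C * ((1 + p) * |x| ^ p * (|x| - |w|)) := by
          have := hmvt; nlinarith
      _ = C * ((1 + p) * |x| ^ p * (C * (|w| * |w| ^ p))) := by rw [hdiff]
      _ ≤ C * ((1 + p) * |x| ^ p * (C * (|x| * |x| ^ p))) := by
          nlinarith [mul_le_mul_of_nonneg_left hmono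
            (show (0:ℝ) ≤ C * ((1 + p) * |x| ^ p * C) by positivity)]
      _ = C^2 * (1+p) * (|x| * |x| ^ p * |x| ^ p) := by ring
      _ = C^2 * (1+p) * |x| ^ (1 + 2/β) := by rw [hexp]
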